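/- No periodic orbits in a cone around a non-fixed invariant curve (Lemma 5.7, in coordinates where the invariant curve has been flattened to order N). Let U be a neighborhood of 0 ∈ ℝ² with coordinates (z, ρ), and let P : U → ℝ² be a map whose second component satisfies, on U, ρ∘P(z, ρ) = ρ + ρᵏ·(ρˢ·Ã(ρ) + z·B(z, ρ)), where k ≥ 1 and s ≥ 0 are integers, Ã is a continuous real function with Ã(0) = α ≠ 0, and B is a continuous real function on U. Then for every integer N > s there exists δ > 0 such that P has no periodic orbit contained in the cone Σ_{N,δ} = {(z, ρ) : |z| < ρᴺ, 0 < ρ < δ}: there exist no m ≥ 1 and points p₀, …, p_{m−1} ∈ Σ_{N,δ} with P(p_i) = p_{i+1 mod m} for all i. -/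

import Mathlib

/-- The conic neighborhood `Σ_{N,δ} = {(z,ρ) : |z| < ρᴺ, 0 < ρ < δ}` in coordinates
`(z, ρ)`. -/
def cone (N : ℕ) (δ : ℝ) : Set (ℝ × ℝ) :=
  {q : ℝ × ℝ | |q.1| < q.2 ^ N ∧ 0 < q.2 ∧ q.2 < δ}

/-- **No periodic orbits in a cone around a non-fixed invariant curve** (Lemma 5.7, in
coordinates where the invariant curve has been flattened to order `N`): if
`ρ∘P = ρ + ρᵏ·(ρˢ·Ã(ρ) + z·B(z,ρ))` with `Ã(0) = α ≠ 0`, then for every `N > s` there is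
`δ > 0` such that `P` has no periodic orbit contained in `Σ_{N,δ}`. -/
theorem no_periodic_orbit_in_cone_nonfixed
    (U : Set (ℝ × ℝ)) (hU : U ∈ nhds ((0, 0) : ℝ × ℝ))
    (P : ℝ × ℝ → ℝ × ℝ)
    (k s : ℕ) (hk : 1 ≤ k)
    (Atil : ℝ → ℝ) (hAtil : Continuous Atil) (α : ℝ) (hα : Atil 0 = α) (hα0 : α ≠ 0)
    (B : ℝ × ℝ → ℝ) (hB : ContinuousOn B U)
    (hP : ∀ p ∈ U, (P p).2 = p.2 + p.2 ^ k * (p.2 ^ s * Atil p.2 + p.1 * B p)) :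
    ∀ N : ℕ, s < N →
      ∃ δ > 0,
        ¬ ∃ (m : ℕ) (p : ℕ → ℝ × ℝ), 0 < m ∧
            (∀ i < m, p i ∈ cone N δ) ∧ (∀ i < m, P (p i) = p (i + 1)) ∧ p m = p 0 := by
  intro N hN
  obtain ⟨ε, hε, hball⟩ := Metric.mem_nhds_iff.mp hU
  have hcomp : IsCompact (Metric.closedBall ((0, 0) : ℝ × ℝ) (ε / 2)) :=
    isCompact_closedBall _ _
  have hsub : Metric.closedBall ((0, 0) : ℝ × ℝ) (ε / 2) ⊆ U := fun x hx =>
    hball (lt_of_le_of_lt (Metric.mem_closedBall.mp hx) (by linarith))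
  obtain ⟨M, hM⟩ := hcomp.exists_bound_of_continuousOn (hB.mono hsub)
  set M' := max M 0 with hM'def
  have hM'0 : (0 : ℝ) ≤ M' := le_max_right _ _
  have hMle : ∀ x ∈ Metric.closedBall ((0, 0) : ℝ × ℝ) (ε / 2), |B x| ≤ M' := fun x hx =>
    (hM x hx).trans (le_max_left _ _)
  have hα2 : 0 < |α| / 2 := by positivity
  obtain ⟨δ1, hδ1, hA⟩ := Metric.continuousAt_iff.mp hAtil.continuousAt (|α| / 2) hα2
  set δ := min (min (ε / 2) δ1) (min 1 (|α| / (2 * (M' + 1)))) with hδdef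
  have hδpos : 0 < δ := by
    apply lt_min (lt_min (by linarith) hδ1) (lt_min one_pos (by positivity))
  refine ⟨δ, hδpos, ?_⟩
  rintro ⟨m, p, hm, hcone, hstep, hper⟩
  set c : ℝ := if 0 < α then 1 else -1 with hc
  have key : ∀ q ∈ cone N δ, c * q.2 < c * (P q).2 := by
    rintro ⟨z, ρ⟩ ⟨hz, hρ0, hρδ⟩
    simp only at hz hρ0 hρδ
    have hρε : ρ < ε / 2 := lt_of_lt_of_le hρδ (le_trans (min_le_left _ _) (min_le_left _ _))
    have hρ1 : ρ ≤ 1 :=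
      le_of_lt (lt_of_lt_of_le hρδ (le_trans (min_le_right _ _) (min_le_left _ _)))
    have hρδ1 : ρ < δ1 :=
      lt_of_lt_of_le hρδ (le_trans (min_le_left _ _) (min_le_right _ _))
    have hρα : ρ * (M' + 1) < |α| / 2 := by
      have h0 : δ ≤ |α| / (2 * (M' + 1)) := le_trans (min_le_right _ _) (min_le_right _ _)
      have h1 : ρ < |α| / (2 * (M' + 1)) := lt_of_lt_of_le hρδ h0
      have h2 : (0 : ℝ) < M' + 1 := by linarith
      calc ρ * (M' + 1) < (|α| / (2 * (M' + 1))) * (M' + 1) :=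
            mul_lt_mul_of_pos_right h1 h2
        _ = |α| / 2 := by field_simp
    have hρs : (0 : ℝ) < ρ ^ s := pow_pos hρ0 s
    have hN0 : N ≠ 0 := by omega
    have hzρ : |z| < ρ := lt_of_lt_of_le hz (pow_le_of_le_one (le_of_lt hρ0) hρ1 hN0)
    have hmem : ((z, ρ) : ℝ × ℝ) ∈ Metric.closedBall ((0, 0) : ℝ × ℝ) (ε / 2) := by
      rw [Metric.mem_closedBall, Prod.dist_eq]
      simp only [Real.dist_eq, sub_zero]
      rw [abs_of_pos hρ0]
      exact max_le (le_of_lt (hzρ.trans hρε)) (le_of_lt hρε)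
    have hmemU : ((z, ρ) : ℝ × ℝ) ∈ U := hsub hmem
    have hAρ : |Atil ρ - α| < |α| / 2 := by
      have hd : dist ρ 0 < δ1 := by
        rw [Real.dist_eq, sub_zero, abs_of_pos hρ0]; exact hρδ1
      have := hA hd
      rwa [Real.dist_eq, hα] at this
    have hzB : |z * B (z, ρ)| < ρ ^ s * (|α| / 2) := by
      have h1 : |z * B (z, ρ)| ≤ ρ ^ N * M' := by
        rw [abs_mul]
        exact mul_le_mul (le_of_lt hz) (hMle _ hmem) (abs_nonneg _)
          (le_of_lt (pow_pos hρ0 N))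
      have h2 : ρ ^ N ≤ ρ ^ (s + 1) :=
        pow_le_pow_of_le_one (le_of_lt hρ0) hρ1 (by omega)
      have h3 : ρ ^ (s + 1) * M' ≤ ρ ^ s * (ρ * (M' + 1)) := by
        rw [pow_succ]
        have : ρ * M' ≤ ρ * (M' + 1) := by nlinarith
        nlinarith
      have h4 : ρ ^ s * (ρ * (M' + 1)) < ρ ^ s * (|α| / 2) :=
        mul_lt_mul_of_pos_left hρα hρs
      calc |z * B (z, ρ)| ≤ ρ ^ N * M' := h1
        _ ≤ ρ ^ (s + 1) * M' := mul_le_mul_of_nonneg_right h2 hM'0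
        _ ≤ ρ ^ s * (ρ * (M' + 1)) := h3
        _ < ρ ^ s * (|α| / 2) := h4
    have hEc : 0 < c * (ρ ^ s * Atil ρ + z * B (z, ρ)) := by
      rcases lt_or_gt_of_ne hα0 with hneg | hpos
      · have hc' : c = -1 := by rw [hc, if_neg (not_lt.mpr (le_of_lt hneg))]
        rw [hc']
        have hαa : |α| = -α := abs_of_neg hneg
        have h1 : Atil ρ < α / 2 := by
          have := abs_sub_lt_iff.mp hAρ
          rw [hαa] at this; linarith [this.1, this.2]
        have h2 : z * B (z, ρ) < ρ ^ s * (-α / 2) := by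
          have := (abs_lt.mp hzB).2
          rw [hαa] at this; linarith
        have h3 : ρ ^ s * Atil ρ < ρ ^ s * (α / 2) := mul_lt_mul_of_pos_left h1 hρs
        nlinarith
      · have hc' : c = 1 := by rw [hc, if_pos hpos]
        rw [hc']
        have hαa : |α| = α := abs_of_pos hpos
        have h1 : α / 2 < Atil ρ := by
          have := abs_sub_lt_iff.mp hAρ
          rw [hαa] at this; linarith [this.1, this.2]
        have h2 : -(ρ ^ s * (α / 2)) < z * B (z, ρ) := by
          have := (abs_lt.mp hzB).1
          rw [hαa] at this; linarith
        have h3 : ρ ^ s * (α / 2) < ρ ^ s * Atil ρ := mul_lt_mul_of_pos_left h1 hρs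
        nlinarith
    have hPv := hP (z, ρ) hmemU
    simp only at hPv
    rw [hPv]
    have hρk : (0 : ℝ) < ρ ^ k := pow_pos hρ0 k
    nlinarith [mul_pos hρk hEc]
  have mono : ∀ i, i ≤ m → 1 ≤ i → c * (p 0).2 < c * (p i).2 := by
    intro i
    induction i with
    | zero => intro _ h; omega
    | succ n ih =>
      intro hle _
      have hn : n < m := by omega
      have hk' := key (p n) (hcone n hn)
      rw [hstep n hn] at hk'
      rcases Nat.eq_zero_or_pos n with h0 | hpos'
      · subst h0; exact hk'
      · exact lt_trans (ih (by omega) hpos') hk'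
  have := mono m le_rfl hm
  rw [hper] at this
  exact lt_irrefl _ this
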